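/- Let k > 0 and let w : [0,T) → ℝ be C¹ with w(t) ≠ 0 for all t ∈ [0,T), and suppose ∫_0^t (k/w(s)²)·(w'(s))² ds ≤ C for all t < T and some constant C. If additionally |w'| is bounded on [0,T) so that lim_{t→T} w(t) exists, then lim_{t→T} w(t) ≠ 0. -/

import Mathlib

open Filter Set intervalIntegral MeasureTheory

/-- Abstract positive-invariance lemma: if the weighted dissipation integral
`∫ (k/w²)(w')²` stays bounded on `[0,T)` and `w(t) → l` as `t → T`, then
`l ≠ 0`. -/
theorem stmt_11 (k T C l : ℝ) (hk : 0 < k) (hT : 0 < T) (w : ℝ → ℝ)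
    (hw : ContDiff ℝ 1 w)
    (hne : ∀ t, 0 ≤ t → t < T → w t ≠ 0)
    (hint : ∀ t, 0 ≤ t → t < T →
      (∫ s in (0 : ℝ)..t, (k / (w s) ^ 2) * (deriv w s) ^ 2) ≤ C)
    (hbd : ∃ B, ∀ t, 0 ≤ t → t < T → |deriv w t| ≤ B)
    (hlim : Tendsto w (nhdsWithin T (Iio T)) (nhds l)) :
    l ≠ 0 := by
  intro hl
  subst hl
  have hwc : Continuous w := hw.continuous
  have hdc : Continuous (deriv w) := hw.continuous_deriv le_rfl
  set F : ℝ → ℝ := fun s => Real.log ((w s) ^ 2) with hF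
  set f : ℝ → ℝ := fun s => (2 * w s * deriv w s) / (w s) ^ 2 with hfdef
  set g : ℝ → ℝ := fun s => (k / (w s) ^ 2) * (deriv w s) ^ 2 with hgdef
  have key : ∀ t, 0 ≤ t → t < T → F 0 - (T + (4 / k) * C) ≤ F t := by
    intro t ht0 htT
    have hne' : ∀ s ∈ Icc (0:ℝ) t, w s ≠ 0 := fun s hs =>
      hne s hs.1 (lt_of_le_of_lt hs.2 htT)
    have hderiv : ∀ s ∈ uIcc (0:ℝ) t, HasDerivAt F (f s) s := by
      intro s hs
      rw [uIcc_of_le ht0] at hs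
      have hws : w s ≠ 0 := hne' s hs
      have h1 : HasDerivAt (fun x => (w x) ^ 2) (2 * w s * deriv w s) s := by
        have := ((hw.differentiable one_ne_zero s).hasDerivAt).fun_pow 2
        push_cast at this
        rw [show (2:ℝ) * w s * deriv w s = 2 * w s ^ 1 * deriv w s by ring]
        exact this
      exact h1.log (pow_ne_zero 2 hws)
    have hcf : ContinuousOn f (Icc (0:ℝ) t) := by
      apply ContinuousOn.div
      · fun_prop
      · fun_prop
      · intro s hs; exact pow_ne_zero 2 (hne' s hs)
    have hcg : ContinuousOn g (Icc (0:ℝ) t) := by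
      apply ContinuousOn.mul
      · apply ContinuousOn.div continuousOn_const
        · fun_prop
        · intro s hs; exact pow_ne_zero 2 (hne' s hs)
      · fun_prop
    have hif : IntervalIntegrable f volume 0 t := by
      apply ContinuousOn.intervalIntegrable
      rwa [uIcc_of_le ht0]
    have hig : IntervalIntegrable g volume 0 t := by
      apply ContinuousOn.intervalIntegrable
      rwa [uIcc_of_le ht0]
    have hFTC : (∫ s in (0:ℝ)..t, f s) = F t - F 0 :=
      intervalIntegral.integral_eq_sub_of_hasDerivAt hderiv hif
    have h1 : |F t - F 0| ≤ ∫ s in (0:ℝ)..t, |f s| := by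
      rw [← hFTC]
      exact intervalIntegral.abs_integral_le_integral_abs ht0
    have hptwise : ∀ s ∈ Icc (0:ℝ) t, |f s| ≤ 1 + (4 / k) * g s := by
      intro s hs
      have hws : w s ≠ 0 := hne' s hs
      have hb2 : 0 < (w s) ^ 2 := by positivity
      have hrhs : (4 / k) * g s = 4 * (deriv w s) ^ 2 / (w s) ^ 2 := by
        simp only [hgdef]
        field_simp
      rw [hrhs, hfdef]
      rw [abs_div, abs_of_pos hb2]
      rw [div_le_iff₀ hb2]
      have habs : |2 * w s * deriv w s| ≤ 2 * |w s| * |deriv w s| := by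
        rw [abs_mul, abs_mul]
        simp [abs_of_nonneg]
      have h2 : (1 + 4 * (deriv w s) ^ 2 / (w s) ^ 2) * (w s) ^ 2
          = (w s) ^ 2 + 4 * (deriv w s) ^ 2 := by
        field_simp
      rw [h2]
      have hsq : |w s| ^ 2 = (w s) ^ 2 := sq_abs _
      have hsq2 : |deriv w s| ^ 2 = (deriv w s) ^ 2 := sq_abs _
      nlinarith [sq_nonneg (|w s| - |deriv w s|), sq_nonneg (|deriv w s|), habs]
    have h2 : (∫ s in (0:ℝ)..t, |f s|) ≤ ∫ s in (0:ℝ)..t, (1 + (4 / k) * g s) := by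
      apply intervalIntegral.integral_mono_on ht0 hif.abs
      · exact (_root_.intervalIntegrable_const).add (hig.const_mul _)
      · exact hptwise
    have h3 : (∫ s in (0:ℝ)..t, (1 + (4 / k) * g s))
        = t + (4 / k) * ∫ s in (0:ℝ)..t, g s := by
      rw [intervalIntegral.integral_add _root_.intervalIntegrable_const (hig.const_mul _),
        intervalIntegral.integral_const, intervalIntegral.integral_const_mul]
      simp
    have h4 : t + (4 / k) * (∫ s in (0:ℝ)..t, g s) ≤ T + (4 / k) * C := by
      have := hint t ht0 htT
      have h4k : (0:ℝ) ≤ 4 / k := by positivity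
      have := mul_le_mul_of_nonneg_left this h4k
      linarith
    have := abs_le.mp (h1.trans (h2.trans (h3 ▸ h4)))
    linarith [this.1]
  -- Now the contradiction : F t → -∞ as t → T⁻, but F is bounded below.
  have hmem : Ioo 0 T ∈ nhdsWithin T (Iio T) :=
    Ioo_mem_nhdsLT_of_mem ⟨hT, le_refl T⟩
  have hsq : Tendsto (fun t => (w t) ^ 2) (nhdsWithin T (Iio T)) (nhds 0) := by
    have := hlim.pow 2
    simpa using this
  have hsq' : Tendsto (fun t => (w t) ^ 2) (nhdsWithin T (Iio T))
      (nhdsWithin 0 (Ioi 0)) := by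
    apply tendsto_nhdsWithin_of_tendsto_nhds_of_eventually_within _ hsq
    filter_upwards [hmem] with t ht
    have hwt : w t ≠ 0 := hne t ht.1.le ht.2
    exact mem_Ioi.mpr (by positivity)
  have hFbot : Tendsto F (nhdsWithin T (Iio T)) atBot :=
    Real.tendsto_log_nhdsGT_zero.comp hsq'
  have hev1 : ∀ᶠ t in nhdsWithin T (Iio T), F t < F 0 - (T + (4 / k) * C) :=
    hFbot.eventually (eventually_lt_atBot _)
  have hev2 : ∀ᶠ t in nhdsWithin T (Iio T), F 0 - (T + (4 / k) * C) ≤ F t := by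
    filter_upwards [hmem] with t ht
    exact key t ht.1.le ht.2
  have : ∃ t, F t < F 0 - (T + (4 / k) * C) ∧ F 0 - (T + (4 / k) * C) ≤ F t :=
    (hev1.and hev2).exists
  obtain ⟨t, h1, h2⟩ := this
  linarith
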